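/- Let ξ and π be pdfs on ℝ with ξ ASU(0) and ξ ⪰_m π, and let d be a distortion function. Then D(π) ≥ D(ξ), where D(π) := inf_{ê ∈ ℝ} ∫_ℝ d(e − ê) π(e) de (integrals in [0, ∞]). -/

import Mathlib

open MeasureTheory Set
open scoped ENNReal NNReal

noncomputable section

/-- A probability density function on ℝ: measurable, nonnegative (via `ℝ≥0`),
integrating to one against Lebesgue measure. -/
def IsPdf (f : ℝ → ℝ≥0) : Prop :=
  Measurable f ∧ ∫⁻ x, (f x : ℝ≥0∞) = 1

/-- `f` is symmetric and unimodal about `c`. -/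
def ASU (c : ℝ) (f : ℝ → ℝ≥0) : Prop :=
  (∀ x, f (c - x) = f (c + x)) ∧ MonotoneOn f (Iic c) ∧ AntitoneOn f (Ici c)

/-- A distortion function: measurable, even, nondecreasing on `[0, ∞)`. -/
def IsDistortion (d : ℝ → ℝ≥0∞) : Prop :=
  Measurable d ∧ (∀ x, d (-x) = d x) ∧ MonotoneOn d (Ici (0 : ℝ))

/-- Symmetric decreasing rearrangement of an `ℝ≥0∞`-valued function:
`f^σ(x) = ∫_0^∞ 1[2|x| < vol{z : f z > ρ}] dρ`. -/
def sdr (f : ℝ → ℝ≥0∞) (x : ℝ) : ℝ≥0∞ :=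
  ∫⁻ ρ in Ioi (0 : ℝ),
    if ENNReal.ofReal (2 * |x|) < volume {z : ℝ | ENNReal.ofReal ρ < f z} then 1 else 0

/-- Symmetric decreasing rearrangement of an `ℝ≥0`-valued function. -/
def sdr' (f : ℝ → ℝ≥0) : ℝ → ℝ≥0∞ := sdr fun x => (f x : ℝ≥0∞)

/-- `ξ` majorizes `π`: `∫_{-ρ}^{ρ} ξ^σ ≥ ∫_{-ρ}^{ρ} π^σ` for all `ρ ≥ 0`. -/
def Majorizes (ξ π : ℝ → ℝ≥0) : Prop :=
  ∀ ρ : ℝ, 0 ≤ ρ → ∫⁻ x in Ioo (-ρ) ρ, sdr' π x ≤ ∫⁻ x in Ioo (-ρ) ρ, sdr' ξ x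

/-- Layer cake for a single value of `ℝ≥0∞`. -/
lemma layer_one (c : ℝ≥0∞) :
    ∫⁻ ρ in Ioi (0:ℝ), (if ENNReal.ofReal ρ < c then (1:ℝ≥0∞) else 0) = c := by
  have hset : MeasurableSet {ρ : ℝ | ENNReal.ofReal ρ < c} :=
    measurableSet_lt ENNReal.measurable_ofReal measurable_const
  have heq : (fun ρ : ℝ => if ENNReal.ofReal ρ < c then (1:ℝ≥0∞) else 0)
      = Set.indicator {ρ : ℝ | ENNReal.ofReal ρ < c} (fun _ => (1:ℝ≥0∞)) := by
    ext ρ; by_cases h : ENNReal.ofReal ρ < c <;> simp [Set.indicator_apply, h]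
  rw [heq, lintegral_indicator hset, setLIntegral_one, Measure.restrict_apply hset]
  rcases eq_or_ne c ∞ with hc | hc
  · have h2 : {ρ : ℝ | ENNReal.ofReal ρ < c} ∩ Ioi 0 = Ioi 0 := by
      ext ρ; simp [hc]
    rw [h2, hc, Real.volume_Ioi]
  · have h2 : {ρ : ℝ | ENNReal.ofReal ρ < c} ∩ Ioi 0 = Ioo 0 c.toReal := by
      ext ρ
      simp only [mem_inter_iff, mem_setOf_eq, mem_Ioi, mem_Ioo]
      constructor
      · rintro ⟨h1, h2⟩
        exact ⟨h2, (ENNReal.ofReal_lt_iff_lt_toReal h2.le hc).mp h1⟩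
      · rintro ⟨h1, h2⟩
        exact ⟨(ENNReal.ofReal_lt_iff_lt_toReal h1.le hc).mpr h2, h1⟩
    rw [h2, Real.volume_Ioo, sub_zero, ENNReal.ofReal_toReal hc]

/-- Swap a double integral of an indicator. -/
lemma lintegral_ind_swap (P : ℝ → ℝ → Prop) [∀ x ρ : ℝ, Decidable (P x ρ)]
    (hP : MeasurableSet {p : ℝ × ℝ | P p.1 p.2})
    {B : Set ℝ} (hB : MeasurableSet B) :
    ∫⁻ x in B, ∫⁻ ρ in Ioi (0:ℝ), (if P x ρ then (1:ℝ≥0∞) else 0)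
      = ∫⁻ ρ in Ioi (0:ℝ), volume (B ∩ {x | P x ρ}) := by
  have hmeas : Measurable fun p : ℝ × ℝ => (if P p.1 p.2 then (1:ℝ≥0∞) else 0) :=
    Measurable.ite hP measurable_const measurable_const
  rw [lintegral_lintegral_swap hmeas.aemeasurable]
  refine lintegral_congr fun ρ => ?_
  have hslice : MeasurableSet {x : ℝ | P x ρ} := by
    have h : {x : ℝ | P x ρ} = (fun x : ℝ => (x, ρ)) ⁻¹' {p : ℝ × ℝ | P p.1 p.2} := rfl
    rw [h]; exact hP.preimage (measurable_id.prodMk measurable_const)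
  have h : (fun x : ℝ => (if P x ρ then (1:ℝ≥0∞) else 0))
      = Set.indicator {x : ℝ | P x ρ} (fun _ => (1:ℝ≥0∞)) := by
    ext x; by_cases h : P x ρ <;> simp [Set.indicator_apply, h]
  rw [h, lintegral_indicator hslice, setLIntegral_one, Measure.restrict_apply hslice,
    Set.inter_comm]

lemma mem_of_symm_decreasing {S : Set ℝ}
    (hS : ∀ a b : ℝ, |a| ≤ |b| → b ∈ S → a ∈ S)
    {y : ℝ} (hy : ENNReal.ofReal (2 * |y|) < volume S) : y ∈ S := by
  by_contra hyS
  have hsub : S ⊆ Ioo (-|y|) |y| := by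
    intro b hb
    rcases le_or_gt |y| |b| with h | h
    · exact absurd (hS y b h hb) hyS
    · exact Set.mem_Ioo.mpr (abs_lt.mp h)
  have hle := measure_mono (μ := volume) hsub
  rw [Real.volume_Ioo] at hle
  have h2 : |y| - -|y| = 2 * |y| := by ring
  rw [h2] at hle
  exact hy.not_ge hle

lemma sdr'_le_of_ASU {ξ : ℝ → ℝ≥0} (hξA : ASU 0 ξ) (x : ℝ) :
    sdr' ξ x ≤ (ξ x : ℝ≥0∞) := by
  have hsymm : ∀ z : ℝ, ξ (-z) = ξ z := by
    intro z; have := hξA.1 z; simpa using this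
  have hkey : ∀ a b : ℝ, |a| ≤ |b| → ξ b ≤ ξ a := by
    intro a b hab
    have ha : ξ a = ξ |a| := by
      rcases abs_choice a with h | h
      · rw [h]
      · rw [h]; exact (hsymm a).symm
    have hb : ξ b = ξ |b| := by
      rcases abs_choice b with h | h
      · rw [h]
      · rw [h]; exact (hsymm b).symm
    rw [ha, hb]
    exact hξA.2.2 (mem_Ici.mpr (abs_nonneg a)) (mem_Ici.mpr (abs_nonneg b)) hab
  have hdef : sdr' ξ x = ∫⁻ ρ in Ioi (0:ℝ),
      (if ENNReal.ofReal (2*|x|) < volume {z : ℝ | ENNReal.ofReal ρ < (ξ z : ℝ≥0∞)}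
        then (1:ℝ≥0∞) else 0) := rfl
  rw [hdef]
  calc ∫⁻ ρ in Ioi (0:ℝ),
      (if ENNReal.ofReal (2*|x|) < volume {z : ℝ | ENNReal.ofReal ρ < (ξ z : ℝ≥0∞)}
        then (1:ℝ≥0∞) else 0)
      ≤ ∫⁻ ρ in Ioi (0:ℝ), (if ENNReal.ofReal ρ < (ξ x : ℝ≥0∞) then (1:ℝ≥0∞) else 0) := by
        refine lintegral_mono fun ρ => ?_
        by_cases h : ENNReal.ofReal (2*|x|)
            < volume {z : ℝ | ENNReal.ofReal ρ < (ξ z : ℝ≥0∞)}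
        · have hx : x ∈ {z : ℝ | ENNReal.ofReal ρ < (ξ z : ℝ≥0∞)} := by
            refine mem_of_symm_decreasing ?_ h
            intro a b hab hb
            exact lt_of_lt_of_le hb (ENNReal.coe_le_coe.mpr (hkey a b hab))
          simp only [if_pos h, if_pos hx.out, le_refl]
        · simp only [if_neg h, zero_le]
    _ = (ξ x : ℝ≥0∞) := layer_one _

/-- Core comparison: for any sublevel set of the distortion, the mass of `π` on the
shifted set is at most the mass of `ξ` on the centered set. -/
lemma core_ineq (ξ π : ℝ → ℝ≥0) (hξ : IsPdf ξ) (hπ : IsPdf π)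
    (hξA : ASU 0 ξ) (hmaj : Majorizes ξ π)
    (d : ℝ → ℝ≥0∞) (hd : IsDistortion d) (τ : ℝ≥0∞) (ehat : ℝ) :
    ∫⁻ e in {e : ℝ | d (e - ehat) ≤ τ}, (π e : ℝ≥0∞)
      ≤ ∫⁻ e in {e : ℝ | d e ≤ τ}, (ξ e : ℝ≥0∞) := by
  set A : Set ℝ := {u : ℝ | d u ≤ τ} with hAdef
  set C : Set ℝ := {e : ℝ | d (e - ehat) ≤ τ} with hCdef
  have hA : MeasurableSet A := measurableSet_le hd.1 measurable_const
  have hC : MeasurableSet C := by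
    have h : C = (fun e : ℝ => e - ehat) ⁻¹' A := rfl
    rw [h]; exact hA.preimage (measurable_id.sub_const ehat)
  have hAdown : ∀ a b : ℝ, |a| ≤ |b| → b ∈ A → a ∈ A := by
    intro a b hab hb
    have hev : ∀ z : ℝ, d z = d |z| := by
      intro z
      rcases abs_choice z with h | h
      · rw [h]
      · rw [h, hd.2.1]
    have : d a ≤ d b := by
      rw [hev a, hev b]
      exact hd.2.2 (mem_Ici.mpr (abs_nonneg a)) (mem_Ici.mpr (abs_nonneg b)) hab
    exact le_trans this hb
  have hvolC : volume C = volume A := by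
    have h : C = (fun e : ℝ => e + (-ehat)) ⁻¹' A := by
      ext e; simp [hCdef, hAdef, sub_eq_add_neg]
    rw [h]; exact measure_preimage_add_right volume (-ehat) A
  rcases eq_or_ne (volume A) ∞ with hV | hV
  · -- A has infinite measure, hence A = univ
    have hAuniv : A = univ := by
      refine eq_univ_of_forall fun y => ?_
      exact mem_of_symm_decreasing hAdown (by rw [hV]; exact ENNReal.ofReal_lt_top)
    calc ∫⁻ e in C, (π e : ℝ≥0∞) ≤ ∫⁻ e, (π e : ℝ≥0∞) := setLIntegral_le_lintegral C _
      _ = 1 := hπ.2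
      _ = ∫⁻ e, (ξ e : ℝ≥0∞) := hξ.2.symm
      _ = ∫⁻ e in A, (ξ e : ℝ≥0∞) := by rw [hAuniv, Measure.restrict_univ]
  · set r : ℝ := (volume A).toReal / 2 with hrdef
    have hr0 : 0 ≤ r := by positivity
    have h2r : 2 * r = (volume A).toReal := by rw [hrdef]; ring
    set m : ℝ → ℝ≥0∞ := fun ρ => volume {z : ℝ | ENNReal.ofReal ρ < (π z : ℝ≥0∞)} with hmdef
    have hm_anti : Antitone m := by
      intro ρ1 ρ2 h
      exact measure_mono fun z hz => lt_of_le_of_lt (ENNReal.ofReal_le_ofReal h) hz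
    have hm_meas : Measurable m := hm_anti.measurable
    -- Step 1 : ∫_C π ≤ ∫ min (vol A) (m ρ) dρ
    have step1 : ∫⁻ e in C, (π e : ℝ≥0∞)
        ≤ ∫⁻ ρ in Ioi (0:ℝ), min (volume A) (m ρ) := by
      have hP : MeasurableSet {p : ℝ × ℝ | ENNReal.ofReal p.2 < (π p.1 : ℝ≥0∞)} :=
        measurableSet_lt (ENNReal.measurable_ofReal.comp measurable_snd)
          ((measurable_coe_nnreal_ennreal.comp hπ.1).comp measurable_fst)
      have h1 : ∫⁻ e in C, (π e : ℝ≥0∞)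
          = ∫⁻ ρ in Ioi (0:ℝ), volume (C ∩ {z : ℝ | ENNReal.ofReal ρ < (π z : ℝ≥0∞)}) := by
        rw [← lintegral_ind_swap (fun x ρ => ENNReal.ofReal ρ < (π x : ℝ≥0∞)) hP hC]
        exact lintegral_congr fun e => (layer_one _).symm
      rw [h1]
      refine lintegral_mono fun ρ => ?_
      refine le_min ?_ ?_
      · exact le_trans (measure_mono inter_subset_left) (le_of_eq hvolC)
      · exact measure_mono inter_subset_right
    -- Step 2 : ∫ min (vol A) (m ρ) dρ ≤ ∫_{Ioo(-r,r)} sdr' π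
    have step2 : ∫⁻ ρ in Ioi (0:ℝ), min (volume A) (m ρ)
        ≤ ∫⁻ x in Ioo (-r) r, sdr' π x := by
      have hP : MeasurableSet {p : ℝ × ℝ | ENNReal.ofReal (2 * |p.1|) < m p.2} := by
        refine measurableSet_lt ?_ (hm_meas.comp measurable_snd)
        exact ENNReal.measurable_ofReal.comp ((measurable_const.mul (measurable_fst.abs)))
      have h1 : ∫⁻ x in Ioo (-r) r, sdr' π x
          = ∫⁻ ρ in Ioi (0:ℝ), volume (Ioo (-r) r ∩ {x : ℝ | ENNReal.ofReal (2 * |x|) < m ρ}) :=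
        lintegral_ind_swap (fun x ρ => ENNReal.ofReal (2 * |x|) < m ρ) hP measurableSet_Ioo
      rw [h1]
      refine lintegral_mono fun ρ => ?_
      rcases eq_or_ne (m ρ) ∞ with hm | hm
      · have hsub : Ioo (-r) r ⊆ Ioo (-r) r ∩ {x : ℝ | ENNReal.ofReal (2 * |x|) < m ρ} := by
          intro x hx
          exact ⟨hx, by rw [hm]; exact ENNReal.ofReal_lt_top⟩
        calc min (volume A) (m ρ) ≤ volume A := min_le_left _ _
          _ = ENNReal.ofReal (2 * r) := by rw [h2r, ENNReal.ofReal_toReal hV]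
          _ = volume (Ioo (-r) r) := by rw [Real.volume_Ioo]; ring_nf
          _ ≤ _ := measure_mono hsub
      · set c : ℝ := (m ρ).toReal with hcdef
        have hc0 : 0 ≤ c := ENNReal.toReal_nonneg
        set s : ℝ := min r (c / 2) with hsdef
        have hsub : Ioo (-s) s ⊆ Ioo (-r) r ∩ {x : ℝ | ENNReal.ofReal (2 * |x|) < m ρ} := by
          intro x hx
          have hxs : |x| < s := abs_lt.mpr ⟨hx.1, hx.2⟩
          constructor
          · exact Set.mem_Ioo.mpr (abs_lt.mp (lt_of_lt_of_le hxs (min_le_left _ _)))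
          · have h2x : 2 * |x| < c := by
              have := lt_of_lt_of_le hxs (min_le_right _ _)
              linarith
            have hcpos : 0 < c := lt_of_le_of_lt (by positivity) h2x
            have : ENNReal.ofReal (2 * |x|) < ENNReal.ofReal c :=
              (ENNReal.ofReal_lt_ofReal_iff hcpos).mpr h2x
            rwa [hcdef, ENNReal.ofReal_toReal hm] at this
        have heq : min (volume A) (m ρ) = volume (Ioo (-s) s) := by
          have hmono : Monotone ENNReal.ofReal := fun _ _ h => ENNReal.ofReal_le_ofReal h
          have h3 : min (2 * r) c = 2 * s := by
            rcases le_total r (c / 2) with h | h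
            · rw [hsdef, min_eq_left h, min_eq_left (by linarith)]
            · rw [hsdef, min_eq_right h, min_eq_right (by linarith)]; ring
          calc min (volume A) (m ρ)
              = min (ENNReal.ofReal (2 * r)) (ENNReal.ofReal c) := by
                rw [h2r, ENNReal.ofReal_toReal hV, hcdef, ENNReal.ofReal_toReal hm]
            _ = ENNReal.ofReal (min (2 * r) c) := (hmono.map_min).symm
            _ = ENNReal.ofReal (2 * s) := by rw [h3]
            _ = volume (Ioo (-s) s) := by rw [Real.volume_Ioo]; ring_nf
        rw [heq]
        exact measure_mono hsub
    -- Step 4/5 : ∫_{Ioo(-r,r)} sdr' ξ ≤ ∫_A ξ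
    have step4 : ∫⁻ x in Ioo (-r) r, sdr' ξ x ≤ ∫⁻ e in A, (ξ e : ℝ≥0∞) := by
      have hsub : Ioo (-r) r ⊆ A := by
        intro y hy
        have hyr : |y| < r := abs_lt.mpr ⟨hy.1, hy.2⟩
        refine mem_of_symm_decreasing hAdown ?_
        rw [← ENNReal.ofReal_toReal hV, ← h2r]
        exact (ENNReal.ofReal_lt_ofReal_iff (by linarith [abs_nonneg y])).mpr (by linarith)
      calc ∫⁻ x in Ioo (-r) r, sdr' ξ x ≤ ∫⁻ x in Ioo (-r) r, (ξ x : ℝ≥0∞) :=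
            lintegral_mono fun x => sdr'_le_of_ASU hξA x
        _ ≤ ∫⁻ e in A, (ξ e : ℝ≥0∞) := lintegral_mono_set hsub
    exact le_trans step1 (le_trans step2 (le_trans (hmaj r hr0) step4))

/-- Layer-cake decomposition of `∫ d(e-c) g(e) de`. -/
lemma layer_prod (d : ℝ → ℝ≥0∞) (hd : Measurable d) (g : ℝ → ℝ≥0) (hg : Measurable g)
    (c : ℝ) :
    ∫⁻ e, d (e - c) * (g e : ℝ≥0∞)
      = ∫⁻ t in Ioi (0:ℝ), ∫⁻ e in {e : ℝ | ENNReal.ofReal t < d (e - c)}, (g e : ℝ≥0∞) := by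
  have hind : ∀ e : ℝ, Measurable fun t : ℝ =>
      (if ENNReal.ofReal t < d (e - c) then (1:ℝ≥0∞) else 0) := fun e =>
    Measurable.ite (measurableSet_lt ENNReal.measurable_ofReal measurable_const)
      measurable_const measurable_const
  calc ∫⁻ e, d (e - c) * (g e : ℝ≥0∞)
      = ∫⁻ e, ∫⁻ t in Ioi (0:ℝ),
          (if ENNReal.ofReal t < d (e - c) then (1:ℝ≥0∞) else 0) * (g e : ℝ≥0∞) := by
        refine lintegral_congr fun e => ?_
        rw [lintegral_mul_const _ (hind e), layer_one]
    _ = ∫⁻ t in Ioi (0:ℝ), ∫⁻ e,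
          (if ENNReal.ofReal t < d (e - c) then (1:ℝ≥0∞) else 0) * (g e : ℝ≥0∞) := by
        refine lintegral_lintegral_swap ?_
        refine Measurable.aemeasurable (Measurable.mul ?_ ?_)
        · exact Measurable.ite
            (measurableSet_lt (ENNReal.measurable_ofReal.comp measurable_snd)
              (hd.comp (measurable_fst.sub_const c)))
            measurable_const measurable_const
        · exact (measurable_coe_nnreal_ennreal.comp hg).comp measurable_fst
    _ = ∫⁻ t in Ioi (0:ℝ), ∫⁻ e in {e : ℝ | ENNReal.ofReal t < d (e - c)}, (g e : ℝ≥0∞) := by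
        refine lintegral_congr fun t => ?_
        have hset : MeasurableSet {e : ℝ | ENNReal.ofReal t < d (e - c)} :=
          measurableSet_lt measurable_const (hd.comp (measurable_id.sub_const c))
        rw [← lintegral_indicator hset]
        refine lintegral_congr fun e => ?_
        by_cases h : ENNReal.ofReal t < d (e - c) <;> simp [Set.indicator_apply, h]

/-- Property 6: if `ξ` is ASU(0) and majorizes `π`, then the minimal expected
distortion under `ξ` is at most that under `π`. -/
theorem stmt6 (ξ π : ℝ → ℝ≥0) (hξ : IsPdf ξ) (hπ : IsPdf π)
    (hξA : ASU 0 ξ) (hmaj : Majorizes ξ π)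
    (d : ℝ → ℝ≥0∞) (hd : IsDistortion d) :
    (⨅ ehat : ℝ, ∫⁻ e, d (e - ehat) * (ξ e : ℝ≥0∞)) ≤
      ⨅ ehat : ℝ, ∫⁻ e, d (e - ehat) * (π e : ℝ≥0∞) := by
  refine le_iInf fun ehat => le_trans (iInf_le _ 0) ?_
  rw [layer_prod d hd.1 ξ hξ.1 0, layer_prod d hd.1 π hπ.1 ehat]
  refine lintegral_mono fun t => ?_
  -- per-level comparison via complements
  set A : Set ℝ := {u : ℝ | d u ≤ ENNReal.ofReal t} with hAdef
  set C : Set ℝ := {e : ℝ | d (e - ehat) ≤ ENNReal.ofReal t} with hCdef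
  have hA : MeasurableSet A := measurableSet_le hd.1 measurable_const
  have hC : MeasurableSet C := by
    have h : C = (fun e : ℝ => e - ehat) ⁻¹' A := rfl
    rw [h]; exact hA.preimage (measurable_id.sub_const ehat)
  have hAc : {e : ℝ | ENNReal.ofReal t < d (e - 0)} = Aᶜ := by
    ext e; simp [hAdef, not_le]
  have hCc : {e : ℝ | ENNReal.ofReal t < d (e - ehat)} = Cᶜ := by
    ext e; simp [hCdef, not_le]
  rw [hAc, hCc]
  have hkey := core_ineq ξ π hξ hπ hξA hmaj d hd (ENNReal.ofReal t) ehat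
  have hsumξ : (∫⁻ e in A, (ξ e : ℝ≥0∞)) + ∫⁻ e in Aᶜ, (ξ e : ℝ≥0∞) = 1 := by
    rw [lintegral_add_compl _ hA, hξ.2]
  have hsumπ : (∫⁻ e in C, (π e : ℝ≥0∞)) + ∫⁻ e in Cᶜ, (π e : ℝ≥0∞) = 1 := by
    rw [lintegral_add_compl _ hC, hπ.2]
  have hAfin : (∫⁻ e in A, (ξ e : ℝ≥0∞)) ≠ ∞ := by
    intro h
    rw [h] at hsumξ
    simp at hsumξ
  have hCfin : (∫⁻ e in C, (π e : ℝ≥0∞)) ≠ ∞ := by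
    intro h
    rw [h] at hsumπ
    simp at hsumπ
  have heqξ : ∫⁻ e in Aᶜ, (ξ e : ℝ≥0∞) = 1 - ∫⁻ e in A, (ξ e : ℝ≥0∞) :=
    ENNReal.eq_sub_of_add_eq hAfin (by rw [add_comm]; exact hsumξ)
  have heqπ : ∫⁻ e in Cᶜ, (π e : ℝ≥0∞) = 1 - ∫⁻ e in C, (π e : ℝ≥0∞) :=
    ENNReal.eq_sub_of_add_eq hCfin (by rw [add_comm]; exact hsumπ)
  rw [heqξ, heqπ]
  exact tsub_le_tsub_left hkey 1
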